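/- arXiv:2001.07366 — 3 statements merged into one kernel-verified Lean document; each statement's English description precedes it below -/
import Mathlib

section
/- Correctness of forward-mode AD for products: let f, g : ℝ^N → ℝ be twice continuously differentiable at a point a ∈ ℝ^N, and let T_a(h) = (h(a), ∇h(a), Hess h(a)) ∈ D2(N) denote the second-order dual lift of a C² function h at a. Then T_a(f·g) = T_a(f) · T_a(g); in particular ∇(fg)(a) = g(a)∇f(a) + f(a)∇g(a) and Hess(fg)(a) = g(a)·Hess f(a) + ∇f(a)∇g(a)ᵀ + ∇g(a)∇f(a)ᵀ + f(a)·Hess g(a). -/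
/-- Second-order dual numbers of dimension `N`: a value, a gradient part, and a Hessian part. -/
abbrev D2 (N : ℕ) : Type := ℝ × (Fin N → ℝ) × Matrix (Fin N) (Fin N) ℝ

/-- Multiplication of second-order dual numbers. -/
noncomputable def D2.mul {N : ℕ} (x y : D2 N) : D2 N :=
  (x.1 * y.1,
   x.1 • y.2.1 + y.1 • x.2.1,
   y.1 • x.2.2 + x.1 • y.2.2 + Matrix.vecMulVec x.2.1 y.2.1 + Matrix.vecMulVec y.2.1 x.2.1)

/-- The gradient of a scalar function on `ℝ^N`. -/
noncomputable def grad {N : ℕ} (h : (Fin N → ℝ) → ℝ) (a : Fin N → ℝ) : Fin N → ℝ :=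
  fun i => fderiv ℝ h a (Pi.single i 1)

/-- The Hessian matrix of a scalar function on `ℝ^N`. -/
noncomputable def hess {N : ℕ} (h : (Fin N → ℝ) → ℝ) (a : Fin N → ℝ) :
    Matrix (Fin N) (Fin N) ℝ :=
  Matrix.of fun i j => fderiv ℝ (fun x => fderiv ℝ h x (Pi.single j 1)) a (Pi.single i 1)

/-- The second-order dual lift `T_a(h) = (h(a), ∇h(a), Hess h(a))`. -/
noncomputable def dualLift {N : ℕ} (h : (Fin N → ℝ) → ℝ) (a : Fin N → ℝ) : D2 N :=
  (h a, grad h a, hess h a)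

/-- Correctness of forward-mode AD for products: the dual lift of a product is the
dual-number product of the lifts; in particular the product rules for the gradient
and the Hessian hold. -/
theorem dualLift_mul {N : ℕ} (f g : (Fin N → ℝ) → ℝ) (a : Fin N → ℝ)
    (hf : ContDiffAt ℝ 2 f a) (hg : ContDiffAt ℝ 2 g a) :
    dualLift (fun x => f x * g x) a = D2.mul (dualLift f a) (dualLift g a) ∧
    grad (fun x => f x * g x) a = g a • grad f a + f a • grad g a ∧
    hess (fun x => f x * g x) a =
      g a • hess f a + Matrix.vecMulVec (grad f a) (grad g a)
        + Matrix.vecMulVec (grad g a) (grad f a) + f a • hess g a := by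
  have hf' : DifferentiableAt ℝ f a := hf.differentiableAt (by norm_num)
  have hg' : DifferentiableAt ℝ g a := hg.differentiableAt (by norm_num)
  have hf1 : DifferentiableAt ℝ (fderiv ℝ f) a :=
    (hf.fderiv_right (m := 1) (by norm_num)).differentiableAt (by norm_num)
  have hg1 : DifferentiableAt ℝ (fderiv ℝ g) a :=
    (hg.fderiv_right (m := 1) (by norm_num)).differentiableAt (by norm_num)
  have hgrad : grad (fun x => f x * g x) a = g a • grad f a + f a • grad g a := by
    funext i
    simp [grad, fderiv_fun_mul hf' hg']
    ring
  have hhess : hess (fun x => f x * g x) a =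
      g a • hess f a + Matrix.vecMulVec (grad f a) (grad g a)
        + Matrix.vecMulVec (grad g a) (grad f a) + f a • hess g a := by
    funext i j
    have key : (fun x => fderiv ℝ (fun y => f y * g y) x (Pi.single j 1)) =ᶠ[nhds a]
        fun x => f x * fderiv ℝ g x (Pi.single j 1) + g x * fderiv ℝ f x (Pi.single j 1) := by
      filter_upwards [hf.eventually (by norm_num), hg.eventually (by norm_num)] with x hfx hgx
      rw [fderiv_fun_mul (hfx.differentiableAt (by norm_num)) (hgx.differentiableAt (by norm_num))]
      simp
    have Df : DifferentiableAt ℝ (fun x => fderiv ℝ f x (Pi.single j 1)) a :=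
      hf1.clm_apply (differentiableAt_const _)
    have Dg : DifferentiableAt ℝ (fun x => fderiv ℝ g x (Pi.single j 1)) a :=
      hg1.clm_apply (differentiableAt_const _)
    have : fderiv ℝ (fun x => fderiv ℝ (fun y => f y * g y) x (Pi.single j 1)) a =
        f a • fderiv ℝ (fun x => fderiv ℝ g x (Pi.single j 1)) a
          + (fderiv ℝ g a (Pi.single j 1)) • fderiv ℝ f a
          + (g a • fderiv ℝ (fun x => fderiv ℝ f x (Pi.single j 1)) a
            + (fderiv ℝ f a (Pi.single j 1)) • fderiv ℝ g a) := by
      rw [key.fderiv_eq, fderiv_fun_add (hf'.fun_mul Dg) (hg'.fun_mul Df), fderiv_fun_mul hf' Dg,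
        fderiv_fun_mul hg' Df]
    simp only [hess, grad, Matrix.of_apply, Matrix.add_apply, Matrix.smul_apply,
      Matrix.vecMulVec_apply, smul_eq_mul, this, ContinuousLinearMap.add_apply,
      ContinuousLinearMap.smul_apply]
    ring
  refine ⟨?_, hgrad, hhess⟩
  unfold dualLift D2.mul
  refine Prod.ext rfl (Prod.ext ?_ ?_) <;> simp only [hgrad, hhess]
  · rw [add_comm]
  · abel
end

section
/- Correctness of forward-mode AD for quotients: let f, g : ℝ^N → ℝ be twice continuously differentiable at a ∈ ℝ^N with g(a) ≠ 0, and let T_a(h) = (h(a), ∇h(a), Hess h(a)) ∈ D2(N). Then T_a(f/g) · T_a(g) = T_a(f) in D2(N); equivalently, the gradient and Hessian of the quotient f/g at a are given by the dual-number division formula: ∇(f/g)(a) = ∇f(a)/g(a) − (f(a)/g(a)²)∇g(a) and Hess(f/g)(a) = Hess f(a)/g(a) − (∇f(a)∇g(a)ᵀ + ∇g(a)∇f(a)ᵀ)/g(a)² + 2f(a)(∇g(a)∇g(a)ᵀ)/g(a)³ − (f(a)/g(a)²)·Hess g(a). -/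
lemma grad_congr {N : ℕ} {u v : (Fin N → ℝ) → ℝ} {a : Fin N → ℝ} (h : u =ᶠ[nhds a] v) :
    grad u a = grad v a := by
  funext i; simp only [grad]; rw [h.fderiv_eq]

lemma hess_congr {N : ℕ} {u v : (Fin N → ℝ) → ℝ} {a : Fin N → ℝ} (h : u =ᶠ[nhds a] v) :
    hess u a = hess v a := by
  funext i j
  simp only [hess, Matrix.of_apply]
  have h2 : (fun x => fderiv ℝ u x (Pi.single j 1)) =ᶠ[nhds a]
      fun x => fderiv ℝ v x (Pi.single j 1) := by
    filter_upwards [Filter.EventuallyEq.fderiv (𝕜 := ℝ) h] with x hx; rw [hx]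
  rw [h2.fderiv_eq]

lemma grad_mul {N : ℕ} {u v : (Fin N → ℝ) → ℝ} {a : Fin N → ℝ}
    (hu : DifferentiableAt ℝ u a) (hv : DifferentiableAt ℝ v a) :
    grad (fun x => u x * v x) a = v a • grad u a + u a • grad v a := by
  funext i
  simp only [grad, fderiv_fun_mul hu hv, ContinuousLinearMap.add_apply,
    ContinuousLinearMap.smul_apply, Pi.add_apply, Pi.smul_apply, smul_eq_mul]
  ring

lemma hess_mul {N : ℕ} {u v : (Fin N → ℝ) → ℝ} {a : Fin N → ℝ}
    (hu : ContDiffAt ℝ 2 u a) (hv : ContDiffAt ℝ 2 v a) :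
    hess (fun x => u x * v x) a = v a • hess u a + u a • hess v a
      + Matrix.vecMulVec (grad u a) (grad v a) + Matrix.vecMulVec (grad v a) (grad u a) := by
  have hu' : ∀ᶠ x in nhds a, DifferentiableAt ℝ u x := by
    filter_upwards [hu.eventually (by norm_num)] with x hx
    exact hx.differentiableAt (by norm_num)
  have hv' : ∀ᶠ x in nhds a, DifferentiableAt ℝ v x := by
    filter_upwards [hv.eventually (by norm_num)] with x hx
    exact hx.differentiableAt (by norm_num)
  funext i j
  have hdu : DifferentiableAt ℝ (fun x => fderiv ℝ u x (Pi.single j 1)) a :=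
    ((hu.fderiv_right (m := 1) (by norm_num)).differentiableAt (by norm_num)).clm_apply
      (differentiableAt_const _)
  have hdv : DifferentiableAt ℝ (fun x => fderiv ℝ v x (Pi.single j 1)) a :=
    ((hv.fderiv_right (m := 1) (by norm_num)).differentiableAt (by norm_num)).clm_apply
      (differentiableAt_const _)
  have key : (fun x => fderiv ℝ (fun y => u y * v y) x (Pi.single j 1)) =ᶠ[nhds a]
      fun x => u x * fderiv ℝ v x (Pi.single j 1) + v x * fderiv ℝ u x (Pi.single j 1) := by
    filter_upwards [hu', hv'] with x hux hvx
    rw [fderiv_fun_mul hux hvx]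
    simp [smul_eq_mul]
  have hua : DifferentiableAt ℝ u a := hu.differentiableAt (by norm_num)
  have hva : DifferentiableAt ℝ v a := hv.differentiableAt (by norm_num)
  simp only [hess, Matrix.of_apply, Matrix.add_apply, Matrix.smul_apply,
    Matrix.vecMulVec_apply, smul_eq_mul]
  rw [key.fderiv_eq, fderiv_fun_add (hua.fun_mul hdv) (hva.fun_mul hdu),
    fderiv_fun_mul hua hdv, fderiv_fun_mul hva hdu]
  simp only [ContinuousLinearMap.add_apply, ContinuousLinearMap.smul_apply, smul_eq_mul]
  simp only [grad]
  ring

/-- Correctness of forward-mode AD for quotients: `T_a(f/g) · T_a(g) = T_a(f)`, and the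
gradient and Hessian of the quotient are given by the dual-number division formula. -/
theorem dualLift_div {N : ℕ} (f g : (Fin N → ℝ) → ℝ) (a : Fin N → ℝ)
    (hf : ContDiffAt ℝ 2 f a) (hg : ContDiffAt ℝ 2 g a) (hga : g a ≠ 0) :
    D2.mul (dualLift (fun x => f x / g x) a) (dualLift g a) = dualLift f a ∧
    grad (fun x => f x / g x) a = (1 / g a) • grad f a - (f a / g a ^ 2) • grad g a ∧
    hess (fun x => f x / g x) a =
      (1 / g a) • hess f a
        - (1 / g a ^ 2) • (Matrix.vecMulVec (grad f a) (grad g a)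
            + Matrix.vecMulVec (grad g a) (grad f a))
        + (2 * f a / g a ^ 3) • Matrix.vecMulVec (grad g a) (grad g a)
        - (f a / g a ^ 2) • hess g a := by
  set q : (Fin N → ℝ) → ℝ := fun x => f x / g x with hqdef
  have hq : ContDiffAt ℝ 2 q a := hf.div hg hga
  have hqa : q a = f a / g a := rfl
  have hfeq : f =ᶠ[nhds a] fun x => q x * g x := by
    filter_upwards [hg.continuousAt.eventually_ne hga] with x hx
    simp [hqdef, div_mul_cancel₀ _ hx]
  have hgradf : grad f a = g a • grad q a + q a • grad g a := by
    rw [grad_congr hfeq, grad_mul (hq.differentiableAt (by norm_num))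
      (hg.differentiableAt (by norm_num))]
  have hhessf : hess f a = g a • hess q a + q a • hess g a
      + Matrix.vecMulVec (grad q a) (grad g a) + Matrix.vecMulVec (grad g a) (grad q a) := by
    rw [hess_congr hfeq, hess_mul hq hg]
  have hgrad : grad q a = (1 / g a) • grad f a - (f a / g a ^ 2) • grad g a := by
    funext i
    have h := congrFun hgradf i
    simp only [Pi.add_apply, Pi.sub_apply, Pi.smul_apply, smul_eq_mul, hqa] at h ⊢
    field_simp at h ⊢
    linear_combination -h
  have hhess : hess q a =
      (1 / g a) • hess f a
        - (1 / g a ^ 2) • (Matrix.vecMulVec (grad f a) (grad g a)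
            + Matrix.vecMulVec (grad g a) (grad f a))
        + (2 * f a / g a ^ 3) • Matrix.vecMulVec (grad g a) (grad g a)
        - (f a / g a ^ 2) • hess g a := by
    funext i j
    have h := congrFun (congrFun hhessf i) j
    have hgi := congrFun hgrad i
    have hgj := congrFun hgrad j
    simp only [Matrix.add_apply, Matrix.sub_apply, Matrix.smul_apply,
      Matrix.vecMulVec_apply, Pi.sub_apply, Pi.smul_apply, smul_eq_mul, hqa] at h hgi hgj ⊢
    rw [hgi, hgj] at h
    field_simp at h ⊢
    linear_combination -h
  refine ⟨?_, hgrad, hhess⟩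
  show ((q a * g a : ℝ), q a • grad g a + g a • grad q a,
      g a • hess q a + q a • hess g a + Matrix.vecMulVec (grad q a) (grad g a)
        + Matrix.vecMulVec (grad g a) (grad q a)) = (f a, grad f a, hess f a)
  refine Prod.ext ?_ (Prod.ext ?_ ?_)
  · simp [hqa, div_mul_cancel₀ _ hga]
  · simp only
    rw [hgradf, add_comm]
  · simp only
    rw [hhessf]
end

section
/- Complex-step derivative error bound: let f : ℂ → ℂ be analytic on an open ball around a real point x, with f mapping real numbers in that ball to real numbers, and suppose ‖f'''(z)‖ ≤ M for all z on the segment from x to x + iΔx, where Δx > 0 is small enough that this segment lies in the ball. Then | Im(f(x + iΔx))/Δx − f'(x) | ≤ (M/6)·Δx², so the complex-step formula approximates the first derivative with a second-order error in the step size. -/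
open Complex Set

lemma aux_iteratedDerivWithin_eq {U s : Set ℝ} (hU : IsOpen U) (hsub : s ⊆ U)
    (hs : UniqueDiffOn ℝ s) {n : ℕ} {g : ℝ → ℝ} (hg : ContDiffOn ℝ n g U) {t : ℝ} (ht : t ∈ s) :
    iteratedDerivWithin n g s t = iteratedDeriv n g t := by
  have h1 := (hg.ftaylorSeriesWithin hU.uniqueDiffOn).mono hsub
  have h2 := h1.eq_iteratedFDerivWithin_of_uniqueDiffOn le_rfl hs ht
  have h3 : ftaylorSeriesWithin ℝ g U t n = iteratedFDerivWithin ℝ n g U t := rfl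
  rw [iteratedDerivWithin_eq_iteratedFDerivWithin, ← h2, h3,
    iteratedFDerivWithin_of_isOpen n hU (hsub ht), iteratedDeriv_eq_iteratedFDeriv]

/-- Complex-step derivative error bound: if `f` is analytic on an open ball around the real
point `x`, maps reals in that ball to reals, and its third derivative is bounded by `M` on the
segment from `x` to `x + i·Δx` (which lies in the ball), then the complex-step formula
`Im(f(x + i·Δx))/Δx` approximates `f'(x)` with error at most `(M/6)·Δx²`. -/
theorem complex_step_derivative_error (f : ℂ → ℂ) (x Δx M r : ℝ) (hr : 0 < r) (hΔx : 0 < Δx)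
    (hf : AnalyticOnNhd ℂ f (Metric.ball (x : ℂ) r))
    (hreal : ∀ t : ℝ, (t : ℂ) ∈ Metric.ball (x : ℂ) r → (f t).im = 0)
    (hseg : segment ℝ (x : ℂ) ((x : ℂ) + Δx * Complex.I) ⊆ Metric.ball (x : ℂ) r)
    (hM : ∀ z ∈ segment ℝ (x : ℂ) ((x : ℂ) + Δx * Complex.I), ‖iteratedDeriv 3 f z‖ ≤ M) :
    ‖(((f ((x : ℂ) + Δx * Complex.I)).im / Δx : ℝ) : ℂ) - deriv f (x : ℂ)‖ ≤ M / 6 * Δx ^ 2 := by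
  set B := Metric.ball (x : ℂ) r with hB
  have hxB : (x : ℂ) ∈ B := Metric.mem_ball_self hr
  -- differentiability of f and its derivatives on B
  have hf1 : AnalyticOnNhd ℂ (deriv f) B := hf.deriv
  have hf2 : AnalyticOnNhd ℂ (deriv (deriv f)) B := hf1.deriv
  have hdf : ∀ z ∈ B, DifferentiableAt ℂ f z := fun z hz => (hf z hz).differentiableAt
  have hdf1 : ∀ z ∈ B, DifferentiableAt ℂ (deriv f) z := fun z hz => (hf1 z hz).differentiableAt
  have hdf2 : ∀ z ∈ B, DifferentiableAt ℂ (deriv (deriv f)) z :=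
    fun z hz => (hf2 z hz).differentiableAt
  -- segment membership
  have hΔC : (Δx : ℂ) ≠ 0 := by exact_mod_cast hΔx.ne'
  have hmem : ∀ t ∈ Icc (0:ℝ) Δx,
      (x : ℂ) + t * I ∈ segment ℝ (x : ℂ) ((x : ℂ) + Δx * I) := by
    intro t ht
    rw [segment_eq_image']
    refine ⟨t / Δx, ⟨div_nonneg ht.1 hΔx.le, (div_le_one hΔx).2 ht.2⟩, ?_⟩
    simp only [add_sub_cancel_left, Complex.real_smul]
    push_cast
    field_simp
  -- the open set U
  set U : Set ℝ := {t : ℝ | (x : ℂ) + t * I ∈ B} with hU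
  have hUopen : IsOpen U := by
    have : Continuous fun t : ℝ => (x : ℂ) + t * I := by continuity
    exact Metric.isOpen_ball.preimage this
  have hIccU : Icc 0 Δx ⊆ U := fun t ht => hseg (hmem t ht)
  have h0U : (0:ℝ) ∈ U := hIccU (left_mem_Icc.2 hΔx.le)
  -- derivative of ψ
  have hψ : ∀ t : ℝ, HasDerivAt (fun s : ℝ => (x : ℂ) + s * I) I t := by
    intro t
    have h := ((Complex.ofRealCLM.hasDerivAt (x := t)).mul_const I).const_add (x : ℂ)
    simpa using h
  -- chain rule
  have keyD : ∀ (g : ℂ → ℂ) (t : ℝ), t ∈ U → DifferentiableAt ℂ g ((x:ℂ) + t * I) →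
      HasDerivAt (fun s : ℝ => g ((x:ℂ) + s * I)) (I * deriv g ((x:ℂ) + t * I)) t := by
    intro g t _ hg
    have h := (hg.hasDerivAt.hasFDerivAt.restrictScalars ℝ).comp_hasDerivAt t (hψ t)
    simpa [Function.comp_def, mul_comm] using h
  -- realness of derivative on reals
  have keyR : ∀ g : ℂ → ℂ, (∀ z ∈ B, DifferentiableAt ℂ g z) →
      (∀ t : ℝ, (t : ℂ) ∈ B → (g t).im = 0) →
      ∀ t : ℝ, (t : ℂ) ∈ B → (deriv g t).im = 0 := by
    intro g hg hre t ht
    have hc : HasDerivAt (fun s : ℝ => g s) (deriv g t) t := by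
      have h := ((hg _ ht).hasDerivAt.hasFDerivAt.restrictScalars ℝ).comp_hasDerivAt t
        Complex.ofRealCLM.hasDerivAt
      simpa [Function.comp_def] using h
    have him : HasDerivAt (fun s : ℝ => (g s).im) ((deriv g t).im) t := by
      have h := Complex.imCLM.hasFDerivAt.comp_hasDerivAt t hc
      simpa [Function.comp_def] using h
    have hopen : IsOpen {s : ℝ | (s : ℂ) ∈ B} :=
      Metric.isOpen_ball.preimage Complex.continuous_ofReal
    have hzero : (fun s : ℝ => (g s).im) =ᶠ[nhds t] fun _ => 0 := by
      filter_upwards [hopen.mem_nhds ht] with s hs using hre s hs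
    have h0 : HasDerivAt (fun s : ℝ => (g s).im) 0 t :=
      (hasDerivAt_const t (0:ℝ)).congr_of_eventuallyEq hzero
    exact him.unique h0
  have hre1 : ∀ t : ℝ, (t : ℂ) ∈ B → (deriv f t).im = 0 := keyR f hdf hreal
  have hre2 : (deriv (deriv f) x).im = 0 := keyR (deriv f) hdf1 hre1 x hxB
  -- the real function u
  set u : ℝ → ℝ := fun s => (f ((x:ℂ) + s * I)).im with hu_def
  set u1 : ℝ → ℝ := fun s => (I * deriv f ((x:ℂ) + s * I)).im with hu1_def
  set u2 : ℝ → ℝ := fun s => (I * (I * deriv (deriv f) ((x:ℂ) + s * I))).im with hu2_def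
  set u3 : ℝ → ℝ := fun s => (I * (I * (I * deriv (deriv (deriv f)) ((x:ℂ) + s * I)))).im
    with hu3_def
  have hφ1 : ∀ t ∈ U, HasDerivAt (fun s : ℝ => f ((x:ℂ) + s * I))
      (I * deriv f ((x:ℂ) + t * I)) t := fun t ht => keyD f t ht (hdf _ ht)
  have hφ2 : ∀ t ∈ U, HasDerivAt (fun s : ℝ => I * deriv f ((x:ℂ) + s * I))
      (I * (I * deriv (deriv f) ((x:ℂ) + t * I))) t :=
    fun t ht => (keyD (deriv f) t ht (hdf1 _ ht)).const_mul I
  have hφ3 : ∀ t ∈ U, HasDerivAt (fun s : ℝ => I * (I * deriv (deriv f) ((x:ℂ) + s * I)))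
      (I * (I * (I * deriv (deriv (deriv f)) ((x:ℂ) + t * I)))) t :=
    fun t ht => ((keyD (deriv (deriv f)) t ht (hdf2 _ ht)).const_mul I).const_mul I
  have hud1 : ∀ t ∈ U, HasDerivAt u (u1 t) t := by
    intro t ht
    have h := Complex.imCLM.hasFDerivAt.comp_hasDerivAt t (hφ1 t ht)
    simpa only [hu_def, hu1_def, Function.comp_def, Complex.imCLM_apply] using h
  have hud2 : ∀ t ∈ U, HasDerivAt u1 (u2 t) t := by
    intro t ht
    have h := Complex.imCLM.hasFDerivAt.comp_hasDerivAt t (hφ2 t ht)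
    simpa only [hu1_def, hu2_def, Function.comp_def, Complex.imCLM_apply] using h
  have hud3 : ∀ t ∈ U, HasDerivAt u2 (u3 t) t := by
    intro t ht
    have h := Complex.imCLM.hasFDerivAt.comp_hasDerivAt t (hφ3 t ht)
    simpa only [hu2_def, hu3_def, Function.comp_def, Complex.imCLM_apply] using h
  -- iterated derivatives of u
  have e1 : ∀ t ∈ U, deriv u t = u1 t := fun t ht => (hud1 t ht).deriv
  have e2 : ∀ t ∈ U, deriv (deriv u) t = u2 t := by
    intro t ht
    have hev : deriv u =ᶠ[nhds t] u1 := by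
      filter_upwards [hUopen.mem_nhds ht] with s hs using e1 s hs
    rw [hev.deriv_eq]
    exact (hud2 t ht).deriv
  have e3 : ∀ t ∈ U, deriv (deriv (deriv u)) t = u3 t := by
    intro t ht
    have hev : deriv (deriv u) =ᶠ[nhds t] u2 := by
      filter_upwards [hUopen.mem_nhds ht] with s hs using e2 s hs
    rw [hev.deriv_eq]
    exact (hud3 t ht).deriv
  have hit2 : iteratedDeriv 2 u = deriv (deriv u) := by
    rw [iteratedDeriv_succ, iteratedDeriv_one]
  have hit3 : iteratedDeriv 3 u = deriv (deriv (deriv u)) := by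
    rw [iteratedDeriv_succ, hit2]
  -- smoothness of u on U
  have hψc : ContDiff ℝ 3 (fun s : ℝ => (x : ℂ) + s * I) := by
    apply ContDiff.add contDiff_const
    exact Complex.ofRealCLM.contDiff.mul contDiff_const
  have hfc : ContDiffOn ℝ 3 (fun s : ℝ => f ((x:ℂ) + s * I)) U := by
    have h1 : ContDiffOn ℂ 3 f B := fun z hz => (hf z hz).contDiffAt.contDiffWithinAt
    exact (h1.restrict_scalars ℝ).comp hψc.contDiffOn (fun t ht => ht)
  have huc : ContDiffOn ℝ 3 u U := Complex.imCLM.contDiff.comp_contDiffOn hfc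
  have hUD : UniqueDiffOn ℝ (Icc (0:ℝ) Δx) := uniqueDiffOn_Icc hΔx
  -- Taylor's theorem with Lagrange remainder
  have hcd2 : ContDiffOn ℝ 2 u (Icc 0 Δx) := (huc.of_le (by norm_num)).mono hIccU
  have hdiff' : DifferentiableOn ℝ (iteratedDerivWithin 2 u (Icc 0 Δx)) (Ioo 0 Δx) := by
    apply DifferentiableOn.congr (f := u2)
    · exact fun t ht => (hud3 t (hIccU (Ioo_subset_Icc_self ht))).differentiableAt.differentiableWithinAt
    · intro t ht
      rw [aux_iteratedDerivWithin_eq hUopen hIccU hUD (huc.of_le (by norm_num))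
        (Ioo_subset_Icc_self ht), hit2]
      exact e2 t (hIccU (Ioo_subset_Icc_self ht))
  obtain ⟨ξ, hξ, hTay⟩ := taylor_mean_remainder_lagrange hΔx.ne
    (by rw [uIcc_of_le hΔx.le]; exact hcd2) (by rw [uIcc_of_le hΔx.le, uIoo_of_le hΔx.le]; exact hdiff')
  rw [uIoo_of_le hΔx.le] at hξ
  rw [uIcc_of_le hΔx.le] at hTay
  -- compute the Taylor polynomial
  have hx0 : ((x:ℂ) + (0:ℝ) * I) = (x:ℂ) := by push_cast; ring
  have hu0 : u 0 = 0 := by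
    simp only [hu_def, hx0]
    exact hreal x hxB
  have hu10 : u1 0 = (deriv f x).re := by
    simp only [hu1_def, hx0, Complex.mul_im, Complex.I_re, Complex.I_im]
    ring
  have hu20 : u2 0 = 0 := by
    simp only [hu2_def, hx0]
    have : I * (I * deriv (deriv f) x) = -(deriv (deriv f) x) := by
      rw [← mul_assoc, Complex.I_mul_I, neg_one_mul]
    rw [this, Complex.neg_im, hre2, neg_zero]
  have h0Icc : (0:ℝ) ∈ Icc (0:ℝ) Δx := left_mem_Icc.2 hΔx.le
  have hiDW : ∀ k : ℕ, k ≤ 3 → iteratedDerivWithin k u (Icc 0 Δx) 0 = iteratedDeriv k u 0 := by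
    intro k hk
    exact aux_iteratedDerivWithin_eq hUopen hIccU hUD
      (huc.of_le (by exact_mod_cast hk)) h0Icc
  have hTpoly : taylorWithinEval u 2 (Icc 0 Δx) 0 Δx = Δx * (deriv f x).re := by
    rw [taylor_within_apply]
    rw [Finset.sum_range_succ, Finset.sum_range_succ, Finset.sum_range_one]
    rw [hiDW 0 (by norm_num), hiDW 1 (by norm_num), hiDW 2 (by norm_num)]
    rw [iteratedDeriv_zero, iteratedDeriv_one, hit2]
    rw [hu0, e1 0 h0U, e2 0 h0U, hu10, hu20]
    simp
  -- bound on the remainder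
  have hξIcc : ξ ∈ Icc (0:ℝ) Δx := Ioo_subset_Icc_self hξ
  have hf3eq : iteratedDeriv 3 f = deriv (deriv (deriv f)) := by
    rw [iteratedDeriv_succ, iteratedDeriv_succ, iteratedDeriv_one]
  have hM' : |u3 ξ| ≤ M := by
    have hle : |u3 ξ| ≤ ‖I * (I * (I * deriv (deriv (deriv f)) ((x:ℂ) + ξ * I)))‖ :=
      Complex.abs_im_le_norm _
    have hnorm : ‖I * (I * (I * deriv (deriv (deriv f)) ((x:ℂ) + ξ * I)))‖
        = ‖deriv (deriv (deriv f)) ((x:ℂ) + ξ * I)‖ := by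
      simp [norm_mul]
    have hMseg := hM _ (hmem ξ hξIcc)
    rw [hf3eq] at hMseg
    calc |u3 ξ| ≤ _ := hle
      _ = _ := hnorm
      _ ≤ M := hMseg
  have hiDW3 : iteratedDerivWithin 3 u (Icc 0 Δx) ξ = u3 ξ := by
    rw [aux_iteratedDerivWithin_eq hUopen hIccU hUD huc hξIcc, hit3]
    exact e3 ξ (hIccU hξIcc)
  rw [hTpoly, hiDW3] at hTay
  -- final arithmetic
  have hM0 : 0 ≤ M := le_trans (norm_nonneg _) (hM _ (left_mem_segment ℝ _ _))
  have hfx : deriv f (x:ℂ) = ((deriv f x).re : ℂ) := by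
    apply Complex.ext
    · simp
    · simp [hre1 x hxB]
  have hkey : |u Δx - Δx * (deriv f x).re| ≤ M * Δx ^ 3 / 6 := by
    rw [hTay]
    rw [abs_div, abs_mul]
    have : |(Δx - 0) ^ (2+1)| = Δx ^ 3 := by
      rw [sub_zero, abs_of_pos (pow_pos hΔx _)]
    rw [this]
    have h6 : |((2+1).factorial : ℝ)| = 6 := by norm_num [Nat.factorial]
    rw [h6]
    apply div_le_div_of_nonneg_right ?_ (by norm_num)
    exact mul_le_mul_of_nonneg_right hM' (pow_nonneg hΔx.le 3)
  rw [hfx]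
  have hgoal : ‖(((f ((x : ℂ) + Δx * I)).im / Δx : ℝ) : ℂ) - (((deriv f x).re : ℝ) : ℂ)‖
      = |u Δx / Δx - (deriv f x).re| := by
    rw [← Complex.ofReal_sub, Complex.norm_real]
    rfl
  rw [hgoal]
  have : u Δx / Δx - (deriv f x).re = (u Δx - Δx * (deriv f x).re) / Δx := by
    field_simp
  rw [this, abs_div, abs_of_pos hΔx]
  rw [div_le_iff₀ hΔx]
  calc |u Δx - Δx * (deriv f x).re| ≤ M * Δx ^ 3 / 6 := hkey
    _ = M / 6 * Δx ^ 2 * Δx := by ring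
end
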